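/- Let κ ≥ 1, c₀ = log(1+√2), and for γ ∈ [√κ, κ] define δ(γ) = (γ² - κ)/((γ+κ)(γ+1)). Then ((γ-1)/(γ+1))^{c₀/(c₀+δ(γ))} · ((√γ-1)/(√γ+1))^{δ(γ)/(c₀+δ(γ))} ≤ (1 - 1/(κ^{2/3}+1))^{0.209}. -/

import Mathlib

set_option maxHeartbeats 2000000 in
/-- Convergence-factor bound: for `κ > 1`, `c₀ = log(1+√2)`,
`γ ∈ [√κ, κ]`, and `δ(γ) = (γ²-κ)/((γ+κ)(γ+1))`, one has
`((γ-1)/(γ+1))^(c₀/(c₀+δ)) · ((√γ-1)/(√γ+1))^(δ/(c₀+δ)) ≤ (1 - 1/(κ^(2/3)+1))^0.209`. -/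
theorem convergence_factor_bound (κ γ : ℝ) (hκ : 1 < κ)
    (hγ1 : Real.sqrt κ ≤ γ) (hγ2 : γ ≤ κ) :
    ((γ - 1) / (γ + 1)) ^
        (Real.log (1 + Real.sqrt 2) /
          (Real.log (1 + Real.sqrt 2) + (γ ^ 2 - κ) / ((γ + κ) * (γ + 1)))) *
      ((Real.sqrt γ - 1) / (Real.sqrt γ + 1)) ^
        ((γ ^ 2 - κ) / ((γ + κ) * (γ + 1)) /
          (Real.log (1 + Real.sqrt 2) + (γ ^ 2 - κ) / ((γ + κ) * (γ + 1)))) ≤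
      (1 - 1 / (κ ^ ((2 : ℝ) / 3) + 1)) ^ (0.209 : ℝ) := by
  have hκ0 : (0:ℝ) < κ := by linarith
  -- x = κ^(1/3)
  set x : ℝ := κ ^ ((1:ℝ)/3) with hxdef
  have hx0 : 0 < x := Real.rpow_pos_of_pos hκ0 _
  have hx1 : 1 < x := by
    rw [hxdef]
    exact Real.one_lt_rpow_iff_of_pos hκ0 |>.mpr (Or.inl ⟨hκ, by norm_num⟩)
  have hx3 : x ^ (3:ℕ) = κ := by
    rw [hxdef, ← Real.rpow_natCast (κ ^ ((1:ℝ)/3)) 3, ← Real.rpow_mul hκ0.le]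
    norm_num
  have hu : κ ^ ((2:ℝ)/3) = x ^ (2:ℕ) := by
    rw [hxdef, ← Real.rpow_natCast (κ ^ ((1:ℝ)/3)) 2, ← Real.rpow_mul hκ0.le]
    norm_num
  have hγ : 1 < γ := lt_of_lt_of_le (by
    rw [show (1:ℝ) = Real.sqrt 1 by simp]
    exact Real.sqrt_lt_sqrt (by norm_num) hκ) hγ1
  have hγ2k : κ ≤ γ ^ 2 := by
    nlinarith [Real.sq_sqrt hκ0.le, Real.sqrt_nonneg κ]
  set g : ℝ := Real.sqrt γ with hgdef
  have hg1 : 1 < g := by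
    rw [hgdef, show (1:ℝ) = Real.sqrt 1 by simp]
    exact Real.sqrt_lt_sqrt (by norm_num) hγ
  have hg2 : g ^ 2 = γ := Real.sq_sqrt (by linarith)
  -- bounds on c := log (1+√2)
  set c : ℝ := Real.log (1 + Real.sqrt 2) with hcdef
  have hs2a : (1.414:ℝ) ≤ Real.sqrt 2 := by
    rw [show (1.414:ℝ) = Real.sqrt (1.414^2) from (Real.sqrt_sq (by norm_num)).symm]
    exact Real.sqrt_le_sqrt (by norm_num)
  have hs2b : Real.sqrt 2 ≤ 1.41422 := by
    rw [show (1.41422:ℝ) = Real.sqrt (1.41422^2) from (Real.sqrt_sq (by norm_num)).symm]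
    exact Real.sqrt_le_sqrt (by norm_num)
  have hc1 : 0.87 ≤ c := by
    have he1 : Real.exp 1 < 2.7182818286 := Real.exp_one_lt_d9
    have h13 : (1.13:ℝ) ≤ Real.exp 0.13 := by
      have := Real.add_one_le_exp (0.13:ℝ); linarith
    have hmul : Real.exp 0.87 * Real.exp 0.13 = Real.exp 1 := by
      rw [← Real.exp_add]; norm_num
    have hexp87 : Real.exp 0.87 ≤ 2.414 := by
      nlinarith [Real.exp_pos (0.87:ℝ), Real.exp_pos (0.13:ℝ)]
    calc (0.87:ℝ) = Real.log (Real.exp 0.87) := (Real.log_exp _).symm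
      _ ≤ c := by
          rw [hcdef]
          exact Real.log_le_log (Real.exp_pos _) (by linarith)
  have hc2 : c ≤ 0.9 := by
    have he1 : (2.7182818283:ℝ) < Real.exp 1 := Real.exp_one_gt_d9
    have h01 : (0.9:ℝ) ≤ Real.exp (-0.1) := by
      have := Real.add_one_le_exp (-0.1:ℝ); linarith
    have hmul : Real.exp 0.9 * Real.exp 0.1 = Real.exp 1 := by
      rw [← Real.exp_add]; norm_num
    have hinv : Real.exp 0.1 * Real.exp (-0.1) = 1 := by
      rw [← Real.exp_add]; norm_num
    have hexp9 : (2.41422:ℝ) ≤ Real.exp 0.9 := by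
      nlinarith [Real.exp_pos (0.9:ℝ), Real.exp_pos (0.1:ℝ), Real.exp_pos (-0.1:ℝ)]
    calc c ≤ Real.log (Real.exp 0.9) := by
          rw [hcdef]
          exact Real.log_le_log (by positivity) (by linarith)
      _ = 0.9 := Real.log_exp _
  -- bounds on d
  set d : ℝ := (γ ^ 2 - κ) / ((γ + κ) * (γ + 1)) with hddef
  have hden : 0 < (γ + κ) * (γ + 1) := by positivity
  have hd0 : 0 ≤ d := div_nonneg (by linarith) hden.le
  have hd1 : d ≤ 1 := by
    rw [hddef, div_le_one hden]
    have hm : 0 ≤ κ * γ := mul_nonneg (by linarith) (by linarith)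
    linarith [hm]
  have hs0 : 0 < c + d := by linarith
  have hs19 : c + d ≤ 1.9 := by linarith
  clear_value x g c d
  -- base positivity
  have hA : 0 < (γ - 1) / (γ + 1) := div_pos (by linarith) (by linarith)
  have hB : 0 < (g - 1) / (g + 1) := div_pos (by linarith) (by linarith)
  have hT : 0 < 1 - 1 / (x ^ (2:ℕ) + 1) := by
    have h1 : (1:ℝ) < x ^ (2:ℕ) + 1 := by nlinarith
    have : 1 / (x ^ (2:ℕ) + 1) < 1 := by
      rw [div_lt_one (by linarith)]; linarith
    linarith
  -- log bounds
  have hlogA : Real.log ((γ - 1) / (γ + 1)) ≤ -(2 / (γ + 1)) := by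
    have h := Real.log_le_sub_one_of_pos hA
    have e : (γ - 1) / (γ + 1) - 1 = -(2 / (γ + 1)) := by
      field_simp
      ring
    rw [e] at h
    exact h
  have hlogB : Real.log ((g - 1) / (g + 1)) ≤ -(2 / (g + 1)) := by
    have h := Real.log_le_sub_one_of_pos hB
    have e : (g - 1) / (g + 1) - 1 = -(2 / (g + 1)) := by
      field_simp
      ring
    rw [e] at h
    exact h
  have hlogT : -(1 / x ^ (2:ℕ)) ≤ Real.log (1 - 1 / (x ^ (2:ℕ) + 1)) := by
    have e : (1:ℝ) - 1 / (x ^ (2:ℕ) + 1) = x ^ (2:ℕ) / (x ^ (2:ℕ) + 1) := by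
      field_simp
      ring
    have hpos : (0:ℝ) < (x ^ (2:ℕ) + 1) / x ^ (2:ℕ) := by positivity
    have h := Real.log_le_sub_one_of_pos hpos
    have e2 : (x ^ (2:ℕ) + 1) / x ^ (2:ℕ) - 1 = 1 / x ^ (2:ℕ) := by
      field_simp
      ring
    have e3 : Real.log (x ^ (2:ℕ) / (x ^ (2:ℕ) + 1)) =
        - Real.log ((x ^ (2:ℕ) + 1) / x ^ (2:ℕ)) := by
      rw [← Real.log_inv, inv_div]
    rw [e, e3]
    rw [e2] at h
    linarith
  -- reduce to exponents
  rw [hu, Real.rpow_def_of_pos hA, Real.rpow_def_of_pos hB, Real.rpow_def_of_pos hT,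
      ← Real.exp_add, Real.exp_le_exp]
  -- weights
  have hw1 : 0 ≤ c / (c + d) := by positivity
  have hw2 : 0 ≤ d / (c + d) := div_nonneg hd0 hs0.le
  have hA' : Real.log ((γ - 1) / (γ + 1)) * (c / (c + d)) ≤
      -(2 / (γ + 1)) * (c / (c + d)) := mul_le_mul_of_nonneg_right hlogA hw1
  have hB' : Real.log ((g - 1) / (g + 1)) * (d / (c + d)) ≤
      -(2 / (g + 1)) * (d / (c + d)) := mul_le_mul_of_nonneg_right hlogB hw2
  have hApos : 0 ≤ (2 / (γ + 1)) * (c / (c + d)) := by positivity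
  have hBpos : 0 ≤ (2 / (g + 1)) * (d / (c + d)) := by positivity
  have hTgoal : -(0.209 / x ^ (2:ℕ)) ≤ Real.log (1 - 1 / (x ^ (2:ℕ) + 1)) * 0.209 := by
    have h := mul_le_mul_of_nonneg_right hlogT (by norm_num : (0:ℝ) ≤ 0.209)
    have e : -(1 / x ^ (2:ℕ)) * 0.209 = -(0.209 / x ^ (2:ℕ)) := by ring
    linarith [e ▸ h]
  by_cases hcase : γ ≤ 4 * x ^ (2:ℕ)
  · -- use the first factor
    have hcs : (0.87:ℝ) / 1.9 ≤ c / (c + d) :=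
      div_le_div₀ (by linarith) hc1 hs0 hs19
    have key : 0.209 / x ^ (2:ℕ) ≤ 2 / (γ + 1) * (c / (c + d)) := by
      have step1 : 0.209 / x ^ (2:ℕ) ≤ 2 / (γ + 1) * (0.87 / 1.9) := by
        have e : 2 / (γ + 1) * ((0.87:ℝ) / 1.9) = (2 * 0.87 / 1.9) / (γ + 1) := by
          ring
        rw [e, div_le_div_iff₀ (by positivity) (by linarith)]
        rcases le_or_gt x 4 with hx4 | hx4
        · have hγx : γ ≤ x ^ (3:ℕ) := by rw [hx3]; exact hγ2
          have h1 : 0 ≤ x * ((x - 1) * (4 - x)) :=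
            mul_nonneg (by linarith) (mul_nonneg (by linarith) (by linarith))
          have h2 : 0 ≤ (x - 1) * (4 - x) := mul_nonneg (by linarith) (by linarith)
          linarith [h1, h2]
        · have h1 : 0 ≤ (x - 4) * (x - 4) := mul_self_nonneg _
          linarith [h1]
      calc 0.209 / x ^ (2:ℕ) ≤ 2 / (γ + 1) * (0.87 / 1.9) := step1
        _ ≤ 2 / (γ + 1) * (c / (c + d)) := by
            apply mul_le_mul_of_nonneg_left hcs (by positivity)
    have hBneg : Real.log ((g - 1) / (g + 1)) * (d / (c + d)) ≤ 0 := by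
      linarith [hB', hBpos]
    linarith [hA', key, hTgoal, hBneg]
  · -- use the second factor
    push_neg at hcase
    have hx4 : 4 ≤ x := by
      by_contra hcon
      push_neg at hcon
      have h1 : 0 < (4 - x) * x ^ (2:ℕ) := mul_pos (by linarith) (pow_pos hx0 2)
      linarith [h1, hx3]
    have hg2x : 2 * x ≤ g := by
      by_contra hcon
      push_neg at hcon
      have h1 : g * g < (2 * x) * (2 * x) :=
        mul_lt_mul'' hcon hcon (by linarith) (by linarith)
      linarith [h1, hg2]
    have hd_lb : (15 / 16 * γ ^ 2) / (4 * κ * γ) ≤ d := by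
      rw [hddef]
      have h16 : 16 * κ ≤ γ ^ 2 := by
        have ha : 0 ≤ (γ - 4 * x ^ (2:ℕ)) * (γ + 4 * x ^ (2:ℕ)) :=
          mul_nonneg (by linarith) (by positivity)
        have hb : 0 ≤ x ^ (3:ℕ) * (x - 1) := mul_nonneg (by positivity) (by linarith)
        linarith [ha, hb, hx3]
      apply div_le_div₀ (by linarith) (by linarith) hden
      have hm1 : 0 ≤ (κ - γ) * γ := mul_nonneg (by linarith) (by linarith)
      have hm2 : 0 ≤ κ * (γ - 1) := mul_nonneg (by linarith) (by linarith)
      have hm3 : 0 ≤ (κ - 1) * γ := mul_nonneg (by linarith) (by linarith)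
      linarith [hm1, hm2, hm3]
    have hds : (15 / 16 * γ ^ 2) / (4 * κ * γ) / 1.9 ≤ d / (c + d) :=
      div_le_div₀ hd0 hd_lb hs0 hs19
    have h2g : 1 / g ≤ 2 / (g + 1) := by
      rw [div_le_div_iff₀ (by linarith) (by linarith)]; linarith
    have key : 0.209 / x ^ (2:ℕ) ≤ 2 / (g + 1) * (d / (c + d)) := by
      have step1 : 0.209 / x ^ (2:ℕ) ≤ 1 / g * ((15 / 16 * γ ^ 2) / (4 * κ * γ) / 1.9) := by
        have e : 1 / g * ((15 / 16 * γ ^ 2) / (4 * κ * γ) / 1.9) =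
            15 * g / (121.6 * x ^ (3:ℕ)) := by
          have hgne : g ≠ 0 := by linarith
          have hxne : x ≠ 0 := by linarith
          rw [← hg2, ← hx3]
          field_simp
          ring
        rw [e, div_le_div_iff₀ (by positivity) (by positivity)]
        have h1 : 0 ≤ (g - 2 * x) * x ^ (2:ℕ) :=
          mul_nonneg (by linarith) (by positivity)
        linarith [h1, pow_pos hx0 3]
      calc 0.209 / x ^ (2:ℕ) ≤ 1 / g * ((15 / 16 * γ ^ 2) / (4 * κ * γ) / 1.9) := step1
        _ ≤ 2 / (g + 1) * (d / (c + d)) := by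
            apply mul_le_mul h2g hds (by positivity) (by positivity)
    have hAneg : Real.log ((γ - 1) / (γ + 1)) * (c / (c + d)) ≤ 0 := by
      linarith [hA', hApos]
    linarith [hB', key, hTgoal, hAneg]
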